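/- arXiv:1108.4181 — 3 statements merged into one kernel-verified Lean document; each statement's English description precedes it below -/
import Mathlib

section
/- Splitting a block-tridiagonal system at one interior block index K decouples it into two independent systems: after modifying the right-hand sides as in the dichotomy step, the concatenation of the solutions of the two subsystems together with X̄_K equals the unique solution of the original system, provided P and both principal submatrices are invertible. -/
/-- Splitting a block-tridiagonal system at an interior block index `K`
decouples it into two independent systems.  `P` is invertible (unique solvability `hinvP`),
`X` is the solution of `P X = F` (so `X K` is the `K`-th block of `P⁻¹ F`), and both
principal submatrices (leading, on blocks `1,…,K-1`, and trailing, on blocks `K+1,…,N`)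
are invertible (`hinvL`, `hinvT`).  If `Y` solves the leading subsystem with right-hand
side modified at block `K-1` by `B (K-1) ⬝ X K`, and `Z` solves the trailing subsystem
with right-hand side modified at block `K+1` by `A (K+1) ⬝ X K`, then the concatenation
`(Y 1,…,Y (K-1), X K, Z (K+1),…,Z N)` equals the unique solution `X` of the original system. -/
theorem stmt2 (M N K : ℕ) (hK1 : 1 < K) (hKN : K < N)
    (A B C : ℕ → Matrix (Fin M) (Fin M) ℝ)
    (X F Y Z : ℕ → Fin M → ℝ)
    (hX0 : X 0 = 0) (hXhigh : ∀ j, N < j → X j = 0)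
    (hinvP : ∀ G : ℕ → Fin M → ℝ, ∃! W : ℕ → Fin M → ℝ,
      (∀ j, j = 0 ∨ N < j → W j = 0) ∧
      ∀ j, 1 ≤ j → j ≤ N →
        -(A j).mulVec (W (j - 1)) + (C j).mulVec (W j) - (B j).mulVec (W (j + 1)) = G j)
    (hsys : ∀ j, 1 ≤ j → j ≤ N →
        -(A j).mulVec (X (j - 1)) + (C j).mulVec (X j) - (B j).mulVec (X (j + 1)) = F j)
    (hinvL : ∀ G : ℕ → Fin M → ℝ, ∃! W : ℕ → Fin M → ℝ,
      (∀ j, j = 0 ∨ K - 1 < j → W j = 0) ∧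
      ∀ j, 1 ≤ j → j ≤ K - 1 →
        -(A j).mulVec (W (j - 1)) + (C j).mulVec (W j) - (B j).mulVec (W (j + 1)) = G j)
    (hinvT : ∀ G : ℕ → Fin M → ℝ, ∃! W : ℕ → Fin M → ℝ,
      (∀ j, j ≤ K ∨ N < j → W j = 0) ∧
      ∀ j, K + 1 ≤ j → j ≤ N →
        -(A j).mulVec (W (j - 1)) + (C j).mulVec (W j) - (B j).mulVec (W (j + 1)) = G j)
    (hYzero : ∀ j, j = 0 ∨ K - 1 < j → Y j = 0)
    (hY : ∀ j, 1 ≤ j → j ≤ K - 1 →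
        -(A j).mulVec (Y (j - 1)) + (C j).mulVec (Y j) - (B j).mulVec (Y (j + 1)) =
          F j + (if j = K - 1 then (B j).mulVec (X K) else 0))
    (hZzero : ∀ j, j ≤ K ∨ N < j → Z j = 0)
    (hZ : ∀ j, K + 1 ≤ j → j ≤ N →
        -(A j).mulVec (Z (j - 1)) + (C j).mulVec (Z j) - (B j).mulVec (Z (j + 1)) =
          F j + (if j = K + 1 then (A j).mulVec (X K) else 0)) :
    (∀ j, 1 ≤ j → j < K → Y j = X j) ∧ (∀ j, K < j → j ≤ N → Z j = X j) := by

  constructor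
  · -- leading subsystem
    obtain ⟨W, hW, hWuniq⟩ := hinvL (fun j => F j + (if j = K - 1 then (B j).mulVec (X K) else 0))
    have hYW : Y = W := hWuniq Y ⟨hYzero, hY⟩
    have hXW : (fun j => if 1 ≤ j ∧ j ≤ K - 1 then X j else 0) = W := by
      apply hWuniq
      refine ⟨?_, ?_⟩
      · intro j hj
        have : ¬ (1 ≤ j ∧ j ≤ K - 1) := by omega
        simp [this]
      · intro j hj1 hj2
        have hjN : j ≤ N := by omega
        have horig := hsys j hj1 hjN
        have e2 : (if 1 ≤ j ∧ j ≤ K - 1 then X j else 0) = X j := by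
          rw [if_pos ⟨hj1, hj2⟩]
        have e3 : (if 1 ≤ j - 1 ∧ j - 1 ≤ K - 1 then X (j-1) else 0) = X (j-1) := by
          by_cases h1 : j = 1
          · subst h1; simp [hX0]
          · rw [if_pos (by omega)]
        by_cases hjK : j = K - 1
        · have e1 : (if 1 ≤ j + 1 ∧ j + 1 ≤ K - 1 then X (j+1) else 0) = 0 := by
            rw [if_neg (by omega)]
          simp only [e1, e2, e3, if_pos hjK]
          have hj1K : j + 1 = K := by omega
          rw [hj1K] at horig
          funext x
          have h := congrFun horig x
          simp only [Matrix.mulVec_zero, Pi.neg_apply, Pi.add_apply, Pi.sub_apply,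
            Pi.zero_apply] at h ⊢
          linarith
        · have e1 : (if 1 ≤ j + 1 ∧ j + 1 ≤ K - 1 then X (j+1) else 0) = X (j+1) := by
            rw [if_pos (by omega)]
          simp only [e1, e2, e3, if_neg hjK, add_zero]
          exact horig
    intro j hj1 hj2
    have : Y j = W j := congrFun hYW j
    rw [this, ← congrFun hXW j, if_pos ⟨hj1, by omega⟩]
  · -- trailing subsystem
    obtain ⟨W, hW, hWuniq⟩ := hinvT (fun j => F j + (if j = K + 1 then (A j).mulVec (X K) else 0))
    have hZW : Z = W := hWuniq Z ⟨hZzero, hZ⟩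
    have hXW : (fun j => if K + 1 ≤ j ∧ j ≤ N then X j else 0) = W := by
      apply hWuniq
      refine ⟨?_, ?_⟩
      · intro j hj
        have : ¬ (K + 1 ≤ j ∧ j ≤ N) := by omega
        exact if_neg this
      · intro j hj1 hjN
        have horig := hsys j (by omega) hjN
        have e2 : (if K + 1 ≤ j ∧ j ≤ N then X j else 0) = X j := by
          rw [if_pos ⟨hj1, hjN⟩]
        have e1 : (if K + 1 ≤ j + 1 ∧ j + 1 ≤ N then X (j+1) else 0) = X (j+1) := by
          by_cases h1 : j = N
          · rw [if_neg (by omega), hXhigh (j+1) (by omega)]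
          · rw [if_pos (by omega)]
        by_cases hjK : j = K + 1
        · have e3 : (if K + 1 ≤ j - 1 ∧ j - 1 ≤ N then X (j-1) else 0) = 0 := by
            rw [if_neg (by omega)]
          simp only [e1, e2, e3, if_pos hjK]
          have hj1K : j - 1 = K := by omega
          rw [hj1K] at horig
          funext x
          have h := congrFun horig x
          simp only [Matrix.mulVec_zero, Pi.neg_apply, Pi.add_apply, Pi.sub_apply,
            Pi.zero_apply, neg_zero] at h ⊢
          linarith
        · have e3 : (if K + 1 ≤ j - 1 ∧ j - 1 ≤ N then X (j-1) else 0) = X (j-1) := by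
            rw [if_pos (by omega)]
          simp only [e1, e2, e3, if_neg hjK, add_zero]
          exact horig
    intro j hj1 hj2
    have : Z j = W j := congrFun hZW j
    rw [this, ← congrFun hXW j, if_pos ⟨by omega, hj2⟩]
end

section
/- Reduced system correctness: with U_i, V_i, W_i defined on each subinterval [K, K+L] as in the superposition principle, if X solves the full block-tridiagonal system PX = F, then the interface blocks X̄_K for K = 1, L+1, 2L+1, ..., (p-1)L+1 satisfy the reduced block-tridiagonal system -[A_K U_{K-1}] X̄_{K-L} + [C_K - A_K V_{K-1} - B_K U_{K+1}] X̄_K - [B_K V_{K+1}] X̄_{K+L} = F̄_K + A_K W_{K-1} + B_K W_{K+1}, with conventions U_0 = V_0 = 0 and X̄_{N+1} = 0. -/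
/-- Reduced system correctness.  `N = p*L`; the subintervals are
`[k*L+1, k*L+L+1]` for `k = 0,…,p-1`, with interface blocks `K = k*L+1`.  On each
subinterval, `U k`, `V k`, `W k` solve the homogeneous / inhomogeneous three-term
recurrences with boundary values `U = 1/0`, `V = 0/1`, `W = 0/0`, and (as they are
*defined* by these boundary value problems) the interior boundary value problems are
uniquely solvable (`huniq`).  Conventions: `A 1 = 0` and `B N = 0` (these blocks do not
occur in `P`), `X 0 = 0` and `X j = 0` for `j > N` (in particular `X (N+1) = 0`), and for
`k = 0` the natural-number expressions `U (k-1) (K-1)`, `V (k-1) (K-1)`, `W (k-1) (K-1)`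
are multiplied by `A 1 = 0`, realizing the convention `U 0 = V 0 = 0`.  If `X` solves the
full block-tridiagonal system `P X = F`, then the interface blocks satisfy the reduced
block-tridiagonal system. -/
theorem stmt4 (M L p N : ℕ) (hL : 1 ≤ L) (hp : 1 ≤ p) (hN : N = p * L)
    (A B C : ℕ → Matrix (Fin M) (Fin M) ℝ)
    (X F : ℕ → Fin M → ℝ)
    (U V : ℕ → ℕ → Matrix (Fin M) (Fin M) ℝ)
    (W : ℕ → ℕ → Fin M → ℝ)
    (hA1 : A 1 = 0) (hBN : B N = 0)
    (hX0 : X 0 = 0) (hXhigh : ∀ j, N < j → X j = 0)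
    (hsys : ∀ j, 1 ≤ j → j ≤ N →
        -(A j).mulVec (X (j - 1)) + (C j).mulVec (X j) - (B j).mulVec (X (j + 1)) = F j)
    (hUbc : ∀ k, k < p → U k (k * L + 1) = 1 ∧ U k (k * L + L + 1) = 0)
    (hVbc : ∀ k, k < p → V k (k * L + 1) = 0 ∧ V k (k * L + L + 1) = 1)
    (hWbc : ∀ k, k < p → W k (k * L + 1) = 0 ∧ W k (k * L + L + 1) = 0)
    (hUrec : ∀ k, k < p → ∀ i, k * L + 1 < i → i < k * L + L + 1 →
        -(A i) * U k (i - 1) + C i * U k i - B i * U k (i + 1) = 0)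
    (hVrec : ∀ k, k < p → ∀ i, k * L + 1 < i → i < k * L + L + 1 →
        -(A i) * V k (i - 1) + C i * V k i - B i * V k (i + 1) = 0)
    (hWrec : ∀ k, k < p → ∀ i, k * L + 1 < i → i < k * L + L + 1 →
        -(A i).mulVec (W k (i - 1)) + (C i).mulVec (W k i) - (B i).mulVec (W k (i + 1)) = F i)
    (huniq : ∀ k, k < p → ∀ Y Y' : ℕ → Fin M → ℝ,
        Y (k * L + 1) = Y' (k * L + 1) → Y (k * L + L + 1) = Y' (k * L + L + 1) →
        (∀ i, k * L + 1 < i → i < k * L + L + 1 →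
          -(A i).mulVec (Y (i - 1)) + (C i).mulVec (Y i) - (B i).mulVec (Y (i + 1)) =
          -(A i).mulVec (Y' (i - 1)) + (C i).mulVec (Y' i) - (B i).mulVec (Y' (i + 1))) →
        ∀ i, k * L + 1 ≤ i → i ≤ k * L + L + 1 → Y i = Y' i) :
    ∀ k, k < p →
      -(A (k * L + 1) * U (k - 1) (k * L)).mulVec (X (k * L + 1 - L)) +
        (C (k * L + 1) - A (k * L + 1) * V (k - 1) (k * L)
          - B (k * L + 1) * U k (k * L + 2)).mulVec (X (k * L + 1)) -
        (B (k * L + 1) * V k (k * L + 2)).mulVec (X (k * L + 1 + L)) =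
      F (k * L + 1) + (A (k * L + 1)).mulVec (W (k - 1) (k * L)) +
        (B (k * L + 1)).mulVec (W k (k * L + 2)) := by
  -- Superposition principle on each subinterval
  have hsup : ∀ k, k < p → ∀ i, k * L + 1 ≤ i → i ≤ k * L + L + 1 →
      X i = (U k i).mulVec (X (k * L + 1)) + (V k i).mulVec (X (k * L + L + 1)) + W k i := by
    intro k hk i hi1 hi2
    refine huniq k hk X
      (fun i => (U k i).mulVec (X (k * L + 1)) + (V k i).mulVec (X (k * L + L + 1)) + W k i)
      ?_ ?_ ?_ i hi1 hi2
    · simp [(hUbc k hk).1, (hVbc k hk).1, (hWbc k hk).1, Matrix.one_mulVec]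
    · simp [(hUbc k hk).2, (hVbc k hk).2, (hWbc k hk).2, Matrix.one_mulVec]
    · intro i h1 h2
      have hiN : i ≤ N := by
        have h1 : (k + 1) * L ≤ p * L := Nat.mul_le_mul_right L hk
        have h2 : (k + 1) * L = k * L + L := by ring
        omega
      have hX := hsys i (by omega) hiN
      have hU := hUrec k hk i h1 h2
      have hV := hVrec k hk i h1 h2
      have hW := hWrec k hk i h1 h2
      have key : -(A i).mulVec
            ((U k (i-1)).mulVec (X (k * L + 1)) + (V k (i-1)).mulVec (X (k * L + L + 1)) + W k (i-1))
          + (C i).mulVec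
            ((U k i).mulVec (X (k * L + 1)) + (V k i).mulVec (X (k * L + L + 1)) + W k i)
          - (B i).mulVec
            ((U k (i+1)).mulVec (X (k * L + 1)) + (V k (i+1)).mulVec (X (k * L + L + 1)) + W k (i+1))
          = (-(A i) * U k (i-1) + C i * U k i - B i * U k (i+1)).mulVec (X (k * L + 1))
          + (-(A i) * V k (i-1) + C i * V k i - B i * V k (i+1)).mulVec (X (k * L + L + 1))
          + (-(A i).mulVec (W k (i-1)) + (C i).mulVec (W k i) - (B i).mulVec (W k (i+1))) := by
        simp only [Matrix.mulVec_add, Matrix.add_mulVec, Matrix.sub_mulVec, Matrix.neg_mulVec,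
          ← Matrix.mulVec_mulVec]
        abel
      rw [hX, key, hU, hV, hW]
      simp [Matrix.zero_mulVec]
  intro k hk
  have hKN : k * L + 1 ≤ N := by
    have h1 : (k + 1) * L ≤ p * L := Nat.mul_le_mul_right L hk
    have h2 : (k + 1) * L = k * L + L := by ring
    omega
  have hX := hsys (k * L + 1) (by omega) hKN
  have hplus : X (k * L + 2) =
      (U k (k*L+2)).mulVec (X (k * L + 1)) + (V k (k*L+2)).mulVec (X (k * L + L + 1)) + W k (k*L+2) :=
    hsup k hk (k * L + 2) (by omega) (by omega)
  have hXL : X (k * L + 1 + L) = X (k * L + L + 1) := by ring_nf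
  have hminus : X (k * L) =
      (U (k-1) (k*L)).mulVec (X (k * L + 1 - L)) + (V (k-1) (k*L)).mulVec (X (k * L + 1)) + W (k-1) (k*L)
      ∨ (A (k * L + 1) = 0 ∧ X (k * L) = 0) := by
    rcases Nat.eq_zero_or_pos k with hk0 | hk1
    · right
      subst hk0
      exact ⟨by simpa using hA1, by simpa using hX0⟩
    · left
      obtain ⟨m, rfl⟩ : ∃ m, k = m + 1 := ⟨k - 1, by omega⟩
      have e1 : (m + 1) * L = m * L + L := by ring
      have h1 : (m + 1 - 1) * L + 1 = (m + 1) * L + 1 - L := by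
        simp only [Nat.add_sub_cancel]
        omega
      have h2 : (m + 1 - 1) * L + L + 1 = (m + 1) * L + 1 := by
        simp only [Nat.add_sub_cancel]
        omega
      have := hsup (m + 1 - 1) (by omega) ((m + 1) * L)
        (by simp only [Nat.add_sub_cancel]; omega) (by simp only [Nat.add_sub_cancel]; omega)
      rw [h1, h2] at this
      exact this
  simp only [Nat.add_sub_cancel] at hX
  rw [hplus] at hX
  rcases hminus with hminus | ⟨hA0, hXkL0⟩
  · rw [hminus] at hX
    rw [hXL]
    rw [← hX]
    simp only [Matrix.mulVec_add, Matrix.add_mulVec, Matrix.sub_mulVec, Matrix.neg_mulVec,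
      ← Matrix.mulVec_mulVec]
    abel
  · rw [hXkL0] at hX
    rw [hXL, hA0, ← hX]
    simp only [Matrix.mulVec_add, Matrix.add_mulVec, Matrix.sub_mulVec, Matrix.neg_mulVec,
      Matrix.zero_mul, Matrix.zero_mulVec, Matrix.mulVec_zero, ← Matrix.mulVec_mulVec]
    abel
end

section
/- If the interface blocks X̄_K (K = 1, L+1, ..., (p-1)L+1) solve the reduced system and the interior blocks are reconstructed via X̄_i = U_i X̄_K + V_i X̄_{K+L} + W_i, then the resulting full vector X solves PX = F. -/
open Matrix

lemma helperInterior {M : ℕ} (A B C U₁ U₂ U₃ V₁ V₂ V₃ : Matrix (Fin M) (Fin M) ℝ)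
    (w₁ w₂ w₃ x y f : Fin M → ℝ)
    (hU : -A * U₁ + C * U₂ - B * U₃ = 0)
    (hV : -A * V₁ + C * V₂ - B * V₃ = 0)
    (hW : -(A.mulVec w₁) + C.mulVec w₂ - B.mulVec w₃ = f) :
    -(A.mulVec (U₁.mulVec x + V₁.mulVec y + w₁))
      + C.mulVec (U₂.mulVec x + V₂.mulVec y + w₂)
      - B.mulVec (U₃.mulVec x + V₃.mulVec y + w₃) = f := by
  have hUx := congrArg (fun P : Matrix (Fin M) (Fin M) ℝ => P.mulVec x) hU
  have hVy := congrArg (fun P : Matrix (Fin M) (Fin M) ℝ => P.mulVec y) hV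
  simp only [Matrix.add_mulVec, Matrix.sub_mulVec, Matrix.neg_mul, Matrix.neg_mulVec,
    Matrix.zero_mulVec, ← Matrix.mulVec_mulVec] at hUx hVy
  simp only [Matrix.mulVec_add]
  linear_combination hUx + hVy + hW

lemma helperInterface {M : ℕ} (A B C U₁ V₁ U₃ V₃ : Matrix (Fin M) (Fin M) ℝ)
    (w₁ w₃ xprev x₀ y f Xm Xp : Fin M → ℝ)
    (hm : A.mulVec Xm = (A * U₁).mulVec xprev + (A * V₁).mulVec x₀ + A.mulVec w₁)
    (hp : Xp = U₃.mulVec x₀ + V₃.mulVec y + w₃)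
    (hred : -(A * U₁).mulVec xprev + (C - A * V₁ - B * U₃).mulVec x₀
        - (B * V₃).mulVec y = f + A.mulVec w₁ + B.mulVec w₃) :
    -(A.mulVec Xm) + C.mulVec x₀ - B.mulVec Xp = f := by
  subst hp
  rw [hm]
  simp only [Matrix.add_mulVec, Matrix.sub_mulVec, Matrix.neg_mulVec,
    ← Matrix.mulVec_mulVec] at hred ⊢
  simp only [Matrix.mulVec_add]
  linear_combination hred


/-- Reconstruction: if the interface blocks `X (k*L+1)`, `k = 0,…,p-1`,
solve the reduced block-tridiagonal system (`hred`) and the interior blocks are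
reconstructed by superposition `X i = U k i ⬝ X K + V k i ⬝ X (K+L) + W k i` on each
subinterval `[K, K+L]`, `K = k*L+1` (`hrecon`), then the resulting full vector `X`
solves the original block-tridiagonal system `P X = F`.  Conventions as before:
`A 1 = 0`, `B N = 0`, `X 0 = 0`, `X j = 0` for `j > N`. -/
theorem stmt5 (M L p N : ℕ) (hL : 1 ≤ L) (hp : 1 ≤ p) (hN : N = p * L)
    (A B C : ℕ → Matrix (Fin M) (Fin M) ℝ)
    (X F : ℕ → Fin M → ℝ)
    (U V : ℕ → ℕ → Matrix (Fin M) (Fin M) ℝ)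
    (W : ℕ → ℕ → Fin M → ℝ)
    (hA1 : A 1 = 0) (hBN : B N = 0)
    (hX0 : X 0 = 0) (hXhigh : ∀ j, N < j → X j = 0)
    (hUbc : ∀ k, k < p → U k (k * L + 1) = 1 ∧ U k (k * L + L + 1) = 0)
    (hVbc : ∀ k, k < p → V k (k * L + 1) = 0 ∧ V k (k * L + L + 1) = 1)
    (hWbc : ∀ k, k < p → W k (k * L + 1) = 0 ∧ W k (k * L + L + 1) = 0)
    (hUrec : ∀ k, k < p → ∀ i, k * L + 1 < i → i < k * L + L + 1 →
        -(A i) * U k (i - 1) + C i * U k i - B i * U k (i + 1) = 0)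
    (hVrec : ∀ k, k < p → ∀ i, k * L + 1 < i → i < k * L + L + 1 →
        -(A i) * V k (i - 1) + C i * V k i - B i * V k (i + 1) = 0)
    (hWrec : ∀ k, k < p → ∀ i, k * L + 1 < i → i < k * L + L + 1 →
        -(A i).mulVec (W k (i - 1)) + (C i).mulVec (W k i) - (B i).mulVec (W k (i + 1)) = F i)
    (hrecon : ∀ k, k < p → ∀ i, k * L + 1 ≤ i → i ≤ k * L + L + 1 →
        X i = (U k i).mulVec (X (k * L + 1)) + (V k i).mulVec (X (k * L + L + 1)) + W k i)
    (hred : ∀ k, k < p →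
      -(A (k * L + 1) * U (k - 1) (k * L)).mulVec (X (k * L + 1 - L)) +
        (C (k * L + 1) - A (k * L + 1) * V (k - 1) (k * L)
          - B (k * L + 1) * U k (k * L + 2)).mulVec (X (k * L + 1)) -
        (B (k * L + 1) * V k (k * L + 2)).mulVec (X (k * L + 1 + L)) =
      F (k * L + 1) + (A (k * L + 1)).mulVec (W (k - 1) (k * L)) +
        (B (k * L + 1)).mulVec (W k (k * L + 2))) :
    ∀ j, 1 ≤ j → j ≤ N →
      -(A j).mulVec (X (j - 1)) + (C j).mulVec (X j) - (B j).mulVec (X (j + 1)) = F j := by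
  intro j hj1 hjN
  rw [hN] at hjN hBN
  -- decompose j = k*L + r + 1 with k < p, r < L
  obtain ⟨k, r, hkp, hrL, hj⟩ : ∃ k r, k < p ∧ r < L ∧ j = k * L + r + 1 := by
    refine ⟨(j - 1) / L, (j - 1) % L, ?_, Nat.mod_lt _ (by omega), ?_⟩
    · by_contra h
      push_neg at h
      have h1 : p * L ≤ ((j - 1) / L) * L := Nat.mul_le_mul_right _ h
      have h2 : ((j - 1) / L) * L ≤ j - 1 := Nat.div_mul_le_self _ _
      omega
    · have h1 := Nat.div_add_mod (j - 1) L
      have h2 : L * ((j - 1) / L) = ((j - 1) / L) * L := Nat.mul_comm _ _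
      omega
  subst hj
  rcases Nat.eq_zero_or_pos r with hr0 | hrpos
  · -- interface case : j = k*L + 1
    subst hr0
    rcases k with _ | k'
    · -- k = 0, j = 1
      simp only [Nat.zero_mul, Nat.zero_add] at *
      have hp2 : X (0 + 1 + 1) = (U 0 (0 + 1 + 1)).mulVec (X (0 * L + 1))
          + (V 0 (0 + 1 + 1)).mulVec (X (0 * L + L + 1)) + W 0 (0 + 1 + 1) :=
        hrecon 0 hkp (0 + 1 + 1) (by omega) (by omega)
      simp only [Nat.zero_mul, Nat.zero_add] at hp2
      have HR := hred 0 hkp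
      simp only [Nat.zero_mul, Nat.zero_add, Nat.zero_sub] at HR
      refine helperInterface (A 1) (B 1) (C 1) (U 0 0) (V 0 0) (U 0 2) (V 0 2)
        (W 0 0) (W 0 2) (X (1 - L)) (X 1) (X (1 + L)) (F 1) (X 0) (X 2) ?_ ?_ ?_
      · simp [hA1]
      · rw [Nat.add_comm L 1] at hp2
        simpa using hp2
      · simpa using HR
    · -- k = k'+1 ≥ 1
      have hk'p : k' < p := by omega
      -- set K := k'*L
      obtain ⟨K, hK⟩ : ∃ K, k' * L = K := ⟨_, rfl⟩
      have hsm : (k' + 1) * L = K + L := by rw [Nat.succ_mul, hK]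
      have hm0 := hrecon k' hk'p (K + L) (by omega) (by omega)
      rw [hK] at hm0
      have hp0 := hrecon (k' + 1) hkp (K + L + 2) (by rw [hsm]; omega) (by rw [hsm]; omega)
      rw [hsm] at hp0
      have HR := hred (k' + 1) hkp
      rw [Nat.succ_sub_one] at HR
      rw [hsm] at HR
      have e1 : K + L + 1 - L = K + 1 := by omega
      have e2 : K + L + 1 + L = K + L + L + 1 := by omega
      rw [e1, e2] at HR
      -- rewrite goal indices
      have eg : (k' + 1) * L + 0 + 1 = K + L + 1 := by rw [hsm]
      rw [eg]
      have egm : K + L + 1 - 1 = K + L := by omega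
      have egp : K + L + 1 + 1 = K + L + 2 := by omega
      rw [egm, egp]
      refine helperInterface (A (K + L + 1)) (B (K + L + 1)) (C (K + L + 1))
        (U k' (K + L)) (V k' (K + L)) (U (k' + 1) (K + L + 2)) (V (k' + 1) (K + L + 2))
        (W k' (K + L)) (W (k' + 1) (K + L + 2)) (X (K + 1)) (X (K + L + 1))
        (X (K + L + L + 1)) (F (K + L + 1)) (X (K + L)) (X (K + L + 2)) ?_ hp0 HR
      · rw [hm0]
        simp only [Matrix.mulVec_add, ← Matrix.mulVec_mulVec]
  · -- interior case : k*L + 1 < j < k*L + L + 1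
    obtain ⟨K, hK⟩ : ∃ K, k * L = K := ⟨_, rfl⟩
    rw [hK]
    have hU := hUrec k hkp (K + r + 1) (by rw [hK]; omega) (by rw [hK]; omega)
    have hV := hVrec k hkp (K + r + 1) (by rw [hK]; omega) (by rw [hK]; omega)
    have hW := hWrec k hkp (K + r + 1) (by rw [hK]; omega) (by rw [hK]; omega)
    have h1 := hrecon k hkp (K + r) (by rw [hK]; omega) (by rw [hK]; omega)
    have h2 := hrecon k hkp (K + r + 1) (by rw [hK]; omega) (by rw [hK]; omega)
    have h3 := hrecon k hkp (K + r + 2) (by rw [hK]; omega) (by rw [hK]; omega)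
    rw [hK] at h1 h2 h3
    have em : K + r + 1 - 1 = K + r := by omega
    have ep : K + r + 1 + 1 = K + r + 2 := by omega
    rw [em] at hU hV hW ⊢
    rw [ep] at hU hV hW ⊢
    rw [h1, h2, h3]
    exact helperInterior _ _ _ _ _ _ _ _ _ _ _ _ _ _ _ hU hV hW
end
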